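/- Invariance of the steady-state edge force under hidden time reversal (Theorem 'sameforce'): Assume in addition that the kernels of W and of W̃ (as linear maps v ↦ W *ᵥ v and v ↦ W̃ *ᵥ v) are both one-dimensional. If r : Fin n → ℝ is strictly positive with W *ᵥ r = 0 and r̃ : Fin n → ℝ is strictly positive with W̃ *ᵥ r̃ = 0, then r a * r̃ b = r b * r̃ a (the steady-state population ratio across the observable edge, hence the steady-state edge force log(W a b · r b / (W b a · r a)), is the same for the forward and the hidden time-reversal dynamics). -/

import Mathlib

open Matrix

/-- Auxiliary: a sum where two terms may differ from a reference sum. -/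
lemma sum_split_aux {n : ℕ} (f g : Fin n → ℝ) (a b : Fin n) (hab : a ≠ b)
    (h : ∀ j, j ≠ a → j ≠ b → f j = g j) :
    ∑ j, f j = (∑ j, g j) + (f a - g a) + (f b - g b) := by
  have h1 : ∑ j, (f j - g j) = ∑ j ∈ ({a, b} : Finset (Fin n)), (f j - g j) := by
    refine (Finset.sum_subset (Finset.subset_univ _) ?_).symm
    intro j _ hj
    simp only [Finset.mem_insert, Finset.mem_singleton] at hj
    push_neg at hj
    rw [h j hj.1 hj.2, sub_self]
  have h2 : ∑ j ∈ ({a, b} : Finset (Fin n)), (f j - g j) = (f a - g a) + (f b - g b) :=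
    Finset.sum_pair hab
  have h3 : ∑ j, (f j - g j) = (∑ j, f j) - ∑ j, g j := Finset.sum_sub_distrib _ _
  linarith [h1, h2, h3]

/-- Auxiliary: two kernel vectors of a matrix with 1-dimensional kernel are dependent. -/
lemma ker_one_dim_dep {n : ℕ} (A : Matrix (Fin n) (Fin n) ℝ)
    (hA : Module.finrank ℝ (LinearMap.ker A.mulVecLin) = 1)
    (u v : Fin n → ℝ) (hu : A *ᵥ u = 0) (hv : A *ᵥ v = 0) (hu0 : u ≠ 0) :
    ∃ c : ℝ, v = c • u := by
  have hu' : u ∈ LinearMap.ker A.mulVecLin := by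
    simpa [LinearMap.mem_ker, Matrix.mulVecLin_apply] using hu
  have hv' : v ∈ LinearMap.ker A.mulVecLin := by
    simpa [LinearMap.mem_ker, Matrix.mulVecLin_apply] using hv
  have hU : (⟨u, hu'⟩ : LinearMap.ker A.mulVecLin) ≠ 0 := by
    intro h
    exact hu0 (congrArg Subtype.val h)
  obtain ⟨c, hc⟩ := (finrank_eq_one_iff_of_nonzero' (⟨u, hu'⟩ : LinearMap.ker A.mulVecLin)
    hU).mp hA ⟨v, hv'⟩
  refine ⟨c, ?_⟩
  have := congrArg Subtype.val hc
  simpa using this.symm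

/-- Invariance of the steady-state edge force under hidden time reversal
(Theorem "sameforce"). -/
theorem same_edge_force {n : ℕ} (hn : 3 ≤ n)
    (W Whid : Matrix (Fin n) (Fin n) ℝ)
    (hW1 : ∀ i j, i ≠ j → 0 ≤ W i j)
    (hW2 : ∀ j, ∑ i, W i j = 0)
    (a b : Fin n) (hab : a ≠ b)
    (hWab : 0 < W a b) (hWba : 0 < W b a)
    (hH1 : Whid a b = 0) (hH2 : Whid b a = 0)
    (hH3 : Whid a a = W a a + W b a)
    (hH4 : Whid b b = W b b + W a b)
    (hH5 : ∀ i j, ¬(i = a ∧ j = b) → ¬(i = b ∧ j = a) → ¬(i = a ∧ j = a) →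
      ¬(i = b ∧ j = b) → Whid i j = W i j)
    (p : Fin n → ℝ) (hp1 : ∀ i, 0 < p i) (hp2 : ∑ i, p i = 1)
    (hp3 : Whid *ᵥ p = 0)
    (Q : ℝ) (hQdef : Q = Real.log (W a b * p b / (W b a * p a)))
    (M : ℝ → Matrix (Fin n) (Fin n) ℝ)
    (hM1 : ∀ q, M q a b = W a b * Real.exp (-q))
    (hM2 : ∀ q, M q b a = W b a * Real.exp q)
    (hM3 : ∀ q i j, ¬(i = a ∧ j = b) → ¬(i = b ∧ j = a) → M q i j = W i j)
    (Wt : Matrix (Fin n) (Fin n) ℝ)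
    (hWt : Wt = Matrix.diagonal p * (M Q)ᵀ * (Matrix.diagonal p)⁻¹)
    (hkerW : Module.finrank ℝ (LinearMap.ker W.mulVecLin) = 1)
    (hkerWt : Module.finrank ℝ (LinearMap.ker Wt.mulVecLin) = 1)
    (r : Fin n → ℝ) (hr1 : ∀ i, 0 < r i) (hr2 : W *ᵥ r = 0)
    (rt : Fin n → ℝ) (hrt1 : ∀ i, 0 < rt i) (hrt2 : Wt *ᵥ rt = 0) :
    r a * rt b = r b * rt a := by
  have hpa : p a ≠ 0 := (hp1 a).ne'
  have hpb : p b ≠ 0 := (hp1 b).ne'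
  have hWabne : W a b ≠ 0 := hWab.ne'
  have hWbane : W b a ≠ 0 := hWba.ne'
  -- entrywise extraction of `A *ᵥ v = 0`
  have mulVec_entry : ∀ (A : Matrix (Fin n) (Fin n) ℝ) (v : Fin n → ℝ),
      A *ᵥ v = 0 → ∀ i, ∑ j, A i j * v j = 0 := by
    intro A v hAv i
    exact congrFun hAv i
  -- the inverse of the diagonal matrix
  have hPinv : (Matrix.diagonal p)⁻¹ = Matrix.diagonal (fun i => (p i)⁻¹) := by
    apply Matrix.inv_eq_right_inv
    rw [Matrix.diagonal_mul_diagonal]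
    have : (fun i => p i * (p i)⁻¹) = fun _ => (1 : ℝ) := by
      funext i
      exact mul_inv_cancel₀ (hp1 i).ne'
    rw [this]
    exact Matrix.diagonal_one
  have hWtij : ∀ i j, Wt i j = p i * (M Q) j i * (p j)⁻¹ := by
    intro i j
    rw [hWt, hPinv, Matrix.mul_diagonal, Matrix.diagonal_mul, Matrix.transpose_apply]
  -- key fact: the vector (rt i / p i) is a left kernel vector of M Q
  have factA : ∀ i, ∑ j, (M Q) j i * (rt j / p j) = 0 := by
    intro i
    have h0 := mulVec_entry Wt rt hrt2 i
    have he : ∑ j, Wt i j * rt j = p i * ∑ j, (M Q) j i * (rt j / p j) := by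
      rw [Finset.mul_sum]
      refine Finset.sum_congr rfl fun j _ => ?_
      rw [hWtij i j, div_eq_mul_inv]
      ring
    rw [he] at h0
    rcases mul_eq_zero.mp h0 with h | h
    · exact absurd h (hp1 i).ne'
    · exact h
  -- row sums of Whid versus W
  have hrow_a : ∀ v : Fin n → ℝ, ∑ j, Whid a j * v j
      = (∑ j, W a j * v j) + (W b a * v a - W a b * v b) := by
    intro v
    have h0 : ∀ j, j ≠ a → j ≠ b → Whid a j * v j = W a j * v j := by
      intro j hja hjb
      rw [hH5 a j (fun h => hjb h.2) (fun h => hab h.1) (fun h => hja h.2) (fun h => hab h.1)]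
    have h1 : ∑ j, Whid a j * v j = (∑ j, W a j * v j)
        + (Whid a a * v a - W a a * v a) + (Whid a b * v b - W a b * v b) :=
      sum_split_aux _ _ a b hab h0
    rw [h1, hH3, hH1]
    ring
  have hrow_b : ∀ v : Fin n → ℝ, ∑ j, Whid b j * v j
      = (∑ j, W b j * v j) + (W a b * v b - W b a * v a) := by
    intro v
    have h0 : ∀ j, j ≠ a → j ≠ b → Whid b j * v j = W b j * v j := by
      intro j hja hjb
      rw [hH5 b j (fun h => hab h.1.symm) (fun h => hja h.2) (fun h => hab h.1.symm)
        (fun h => hjb h.2)]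
    have h1 : ∑ j, Whid b j * v j = (∑ j, W b j * v j)
        + (Whid b a * v a - W b a * v a) + (Whid b b * v b - W b b * v b) :=
      sum_split_aux _ _ a b hab h0
    rw [h1, hH4, hH2]
    ring
  have hrow_other : ∀ (v : Fin n → ℝ) i, i ≠ a → i ≠ b →
      ∑ j, Whid i j * v j = ∑ j, W i j * v j := by
    intro v i hia hib
    refine Finset.sum_congr rfl fun j _ => ?_
    rw [hH5 i j (fun h => hia h.1) (fun h => hib h.1) (fun h => hia h.1) (fun h => hib h.1)]
  -- main case split
  by_cases hc : W a b * p b = W b a * p a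
  · -- degenerate case: Q = 0, both r and rt are proportional to p
    have hQ0 : Q = 0 := by
      have h1 : W a b * p b / (W b a * p a) = 1 := by
        rw [hc]
        exact div_self (mul_pos hWba (hp1 a)).ne'
      rw [hQdef, h1, Real.log_one]
    have hMQW : M Q = W := by
      funext i j
      by_cases h1 : i = a ∧ j = b
      · rw [h1.1, h1.2, hM1, hQ0]
        simp
      · by_cases h2 : i = b ∧ j = a
        · rw [h2.1, h2.2, hM2, hQ0]
          simp
        · exact hM3 Q i j h1 h2
    have hWhp : ∀ i, ∑ j, Whid i j * p j = 0 := mulVec_entry Whid p hp3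
    have hWp : ∀ i, ∑ j, W i j * p j = 0 := by
      intro i
      by_cases hia : i = a
      · subst hia
        have h1 := hrow_a p
        rw [hWhp i] at h1
        linarith [hc]
      · by_cases hib : i = b
        · subst hib
          have h1 := hrow_b p
          rw [hWhp i] at h1
          linarith [hc]
        · rw [← hrow_other p i hia hib]
          exact hWhp i
    have hWp' : W *ᵥ p = 0 := funext fun i => hWp i
    have hWtp : Wt *ᵥ p = 0 := by
      funext i
      show ∑ j, Wt i j * p j = 0
      have he : ∀ j, Wt i j * p j = p i * W j i := by
        intro j
        rw [hWtij i j, hMQW, mul_assoc, inv_mul_cancel₀ (hp1 j).ne', mul_one]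
      rw [Finset.sum_congr rfl fun j _ => he j, ← Finset.mul_sum, hW2 i, mul_zero]
    have hp0 : p ≠ 0 := fun h => hpa (congrFun h a)
    obtain ⟨c, hcr⟩ := ker_one_dim_dep W hkerW p r hWp' hr2 hp0
    obtain ⟨c', hcrt⟩ := ker_one_dim_dep Wt hkerWt p rt hWtp hrt2 hp0
    rw [hcr, hcrt]
    simp only [Pi.smul_apply, smul_eq_mul]
    ring
  · -- nondegenerate case: effective-affinity computation
    have hQ : Real.exp Q = W a b * p b / (W b a * p a) := by
      rw [hQdef, Real.exp_log (div_pos (mul_pos hWab (hp1 b)) (mul_pos hWba (hp1 a)))]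
    have hQn : Real.exp (-Q) = W b a * p a / (W a b * p b) := by
      rw [Real.exp_neg, hQ, inv_div]
    have hWr : ∀ i, ∑ j, W i j * r j = 0 := mulVec_entry W r hr2
    -- column sums of Whid against rt/p
    have hMQaa : M Q a a = W a a := hM3 Q a a (fun h => hab h.2) (fun h => hab h.1)
    have hMQbb : M Q b b = W b b := hM3 Q b b (fun h => hab h.1.symm) (fun h => hab h.2.symm)
    have hcol_a : ∑ i, Whid i a * (rt i / p i)
        = W b a * (rt a / p a) - W b a * Real.exp Q * (rt b / p b) := by
      have h0 : ∀ i, i ≠ a → i ≠ b → Whid i a * (rt i / p i) = M Q i a * (rt i / p i) := by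
        intro i hia hib
        rw [hH5 i a (fun h => hia h.1) (fun h => hib h.1) (fun h => hia h.1) (fun h => hib h.1),
          hM3 Q i a (fun h => hia h.1) (fun h => hib h.1)]
      have h1 : ∑ i, Whid i a * (rt i / p i) = (∑ i, M Q i a * (rt i / p i))
          + (Whid a a * (rt a / p a) - M Q a a * (rt a / p a))
          + (Whid b a * (rt b / p b) - M Q b a * (rt b / p b)) :=
        sum_split_aux _ _ a b hab h0
      rw [h1, factA a, hH3, hH2, hMQaa, hM2 Q]
      ring
    have hcol_b : ∑ i, Whid i b * (rt i / p i)
        = W a b * (rt b / p b) - W a b * Real.exp (-Q) * (rt a / p a) := by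
      have h0 : ∀ i, i ≠ a → i ≠ b → Whid i b * (rt i / p i) = M Q i b * (rt i / p i) := by
        intro i hia hib
        rw [hH5 i b (fun h => hia h.1) (fun h => hib h.1) (fun h => hia h.1) (fun h => hib h.1),
          hM3 Q i b (fun h => hia h.1) (fun h => hib h.1)]
      have h1 : ∑ i, Whid i b * (rt i / p i) = (∑ i, M Q i b * (rt i / p i))
          + (Whid a b * (rt a / p a) - M Q a b * (rt a / p a))
          + (Whid b b * (rt b / p b) - M Q b b * (rt b / p b)) :=
        sum_split_aux _ _ a b hab h0
      rw [h1, factA b, hH4, hH1, hMQbb, hM1 Q]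
      ring
    have hcol_other : ∀ j, j ≠ a → j ≠ b → ∑ i, Whid i j * (rt i / p i) = 0 := by
      intro j hja hjb
      rw [← factA j]
      refine Finset.sum_congr rfl fun i _ => ?_
      rw [hH5 i j (fun h => hjb h.2) (fun h => hja h.2) (fun h => hja h.2) (fun h => hjb h.2),
        hM3 Q i j (fun h => hjb h.2) (fun h => hja h.2)]
    -- double-sum identity
    have hswap : ∑ i, ((rt i / p i) * ∑ j, Whid i j * r j)
        = ∑ j, ((∑ i, Whid i j * (rt i / p i)) * r j) := by
      simp_rw [Finset.mul_sum, Finset.sum_mul]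
      rw [Finset.sum_comm]
      refine Finset.sum_congr rfl fun i _ => Finset.sum_congr rfl fun j _ => ?_
      ring
    have hL : ∑ i, ((rt i / p i) * ∑ j, Whid i j * r j)
        = (rt a / p a) * (W b a * r a - W a b * r b)
          + (rt b / p b) * (W a b * r b - W b a * r a) := by
      have h0 : ∀ i, i ≠ a → i ≠ b → (rt i / p i) * (∑ j, Whid i j * r j) = (0 : ℝ) := by
        intro i hia hib
        rw [hrow_other r i hia hib, hWr i, mul_zero]
      have h1 : ∑ i, ((rt i / p i) * ∑ j, Whid i j * r j)
          = (∑ _i : Fin n, (0 : ℝ))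
            + ((rt a / p a) * (∑ j, Whid a j * r j) - 0)
            + ((rt b / p b) * (∑ j, Whid b j * r j) - 0) :=
        sum_split_aux _ _ a b hab h0
      rw [h1, hrow_a r, hrow_b r, hWr a, hWr b, Finset.sum_const_zero]
      ring
    have hR : ∑ j, ((∑ i, Whid i j * (rt i / p i)) * r j)
        = (W b a * (rt a / p a) - W b a * Real.exp Q * (rt b / p b)) * r a
          + (W a b * (rt b / p b) - W a b * Real.exp (-Q) * (rt a / p a)) * r b := by
      have h0 : ∀ j, j ≠ a → j ≠ b → (∑ i, Whid i j * (rt i / p i)) * r j = (0 : ℝ) := by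
        intro j hja hjb
        rw [hcol_other j hja hjb, zero_mul]
      have h1 : ∑ j, ((∑ i, Whid i j * (rt i / p i)) * r j)
          = (∑ _j : Fin n, (0 : ℝ))
            + ((∑ i, Whid i a * (rt i / p i)) * r a - 0)
            + ((∑ i, Whid i b * (rt i / p i)) * r b - 0) :=
        sum_split_aux _ _ a b hab h0
      rw [h1, hcol_a, hcol_b, Finset.sum_const_zero]
      ring
    have hE : (rt a / p a) * (W b a * r a - W a b * r b)
          + (rt b / p b) * (W a b * r b - W b a * r a)
        = (W b a * (rt a / p a) - W b a * Real.exp Q * (rt b / p b)) * r a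
          + (W a b * (rt b / p b) - W a b * Real.exp (-Q) * (rt a / p a)) * r b := by
      rw [← hL, hswap, hR]
    have h1 : W b a * Real.exp Q * p a = W a b * p b := by
      rw [hQ]
      field_simp
    have h2 : W a b * Real.exp (-Q) * p b = W b a * p a := by
      rw [hQn]
      field_simp
    have d1 : rt a / p a * p a = rt a := div_mul_cancel₀ (rt a) hpa
    have d2 : rt b / p b * p b = rt b := div_mul_cancel₀ (rt b) hpb
    have hkey : (W a b * p b - W b a * p a) * (r a * rt b - r b * rt a) = 0 := by
      linear_combination (p a * p b) * hE - (p b * r a * (rt b / p b)) * h1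
        - (p a * r b * (rt a / p a)) * h2
        + (W b a * p a * r a - W a b * p b * r a) * d2
        + (W a b * p b * r b - W b a * p a * r b) * d1
    rcases mul_eq_zero.mp hkey with h | h
    · exact absurd (sub_eq_zero.mp h) hc
    · exact sub_eq_zero.mp h
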